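/- Let n ∈ ℕ, α ∈ (0,1], and μ, ν, c ∈ ℝ with c not a nonpositive integer. For x > 0 with |x^α| < 1, the recursion formula ₂F₁(μ+n, ν; c; x^α) = Σ_{k=0}^{n} C(n,k) · ((ν)_k/(c)_k) · x^{αk} · ₂F₁(μ+k, ν+k; c+k; x^α) holds, where C(n,k) is the binomial coefficient. -/

import Mathlib

open scoped Real BigOperators
open Filter Topology

noncomputable def poch (b : ℝ) (n : ℕ) : ℝ := (ascPochhammer ℝ n).eval b

noncomputable def F21 (μ ν c z : ℝ) : ℝ :=
  ∑' n : ℕ, poch μ n * poch ν n / (poch c n * (n.factorial : ℝ)) * z ^ n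

noncomputable def confD (α : ℝ) (f : ℝ → ℝ) : ℝ → ℝ :=
  fun x => x ^ (1 - α) * deriv f x

noncomputable def theta (α : ℝ) (f : ℝ → ℝ) : ℝ → ℝ :=
  fun x => (1 / α) * x ^ α * confD α f x

/-! ### Auxiliary lemmas -/

lemma poch_zero' (b : ℝ) : poch b 0 = 1 := by simp [poch]

lemma poch_succ' (b : ℝ) (n : ℕ) : poch b (n + 1) = poch b n * (b + n) :=
  ascPochhammer_succ_eval n b

lemma poch_succ_left' (b : ℝ) (n : ℕ) : poch b (n + 1) = b * poch (b + 1) n := by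
  simp [poch, ascPochhammer_succ_left, Polynomial.eval_comp]

lemma poch_add' (b : ℝ) (k m : ℕ) : poch b (k + m) = poch b k * poch (b + k) m := by
  have := congrArg (Polynomial.eval b) (ascPochhammer_mul (S := ℝ) k m)
  simpa [poch, Polynomial.eval_comp] using this.symm

lemma poch_ne_zero' {c : ℝ} (hc : ∀ k : ℕ, c + (k:ℝ) ≠ 0) (m : ℕ) : poch c m ≠ 0 := by
  induction m with
  | zero => simp [poch]
  | succ m ih => rw [poch_succ']; exact mul_ne_zero ih (hc m)

lemma pochB' (μ : ℝ) (j : ℕ) :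
    poch (μ + 1) (j+1) / (j+1).factorial
      = poch μ (j+1) / (j+1).factorial + poch (μ + 1) j / j.factorial := by
  have h1 : poch (μ+1) (j+1) = poch (μ+1) j * (μ+1+j) := poch_succ' _ _
  have h2 : poch μ (j+1) = μ * poch (μ+1) j := poch_succ_left' _ _
  have hf : ((j+1).factorial : ℝ) = ((j:ℝ)+1) * j.factorial := by
    push_cast [Nat.factorial_succ]; ring
  have hj : (j.factorial : ℝ) ≠ 0 := Nat.cast_ne_zero.2 (Nat.factorial_ne_zero j)
  have hj1 : ((j:ℝ)+1) ≠ 0 := by positivity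
  rw [h1, h2, hf]
  field_simp
  ring

lemma Pkey' : ∀ (n : ℕ) (μ : ℝ) (m : ℕ),
    poch (μ + n) m / m.factorial
      = ∑ k ∈ Finset.range (n+1),
          (if k ≤ m then (n.choose k : ℝ) * (poch (μ + k) (m - k) / (m - k).factorial) else 0) := by
  intro n
  induction n with
  | zero => intro μ m; simp
  | succ n ih =>
    intro μ m
    have hstep : ∀ k, ((if k ≤ m then ((n.choose k : ℝ)) * (poch (μ+1+(k:ℕ)) (m-k) / ((m-k).factorial:ℝ)) else 0))
        = (if k ≤ m then (n.choose k : ℝ) * (poch (μ+(k:ℕ)) (m-k) / (m-k).factorial) else 0)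
          + (if k+1 ≤ m then (n.choose k : ℝ) * (poch (μ+((k+1:ℕ):ℝ)) (m-(k+1)) / ((m-(k+1)).factorial:ℝ)) else 0) := by
      intro k
      by_cases hk : k ≤ m
      · rcases eq_or_lt_of_le hk with h | h
        · subst h
          simp [poch_zero']
        · have hk1 : k + 1 ≤ m := h
          obtain ⟨j, hj⟩ : ∃ j, m - k = j + 1 := ⟨m - k - 1, by omega⟩
          have hj2 : m - (k+1) = j := by omega
          rw [if_pos hk, if_pos hk, if_pos hk1, hj, hj2]
          have hp := pochB' (μ + (k:ℕ)) j
          rw [show μ+1+((k:ℕ):ℝ) = (μ+(k:ℕ))+1 by ring,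
            show μ+(((k+1:ℕ)):ℝ) = (μ+(k:ℕ))+1 by push_cast; ring, hp]
          ring
      · have hk1 : ¬ (k + 1 ≤ m) := by omega
        simp [hk, hk1]
    have hsplit : ∑ k ∈ Finset.range (n+1+1),
          (if k ≤ m then (((n+1).choose k : ℝ)) * (poch (μ + k) (m-k)/((m-k).factorial:ℝ)) else 0)
        = (∑ k ∈ Finset.range (n+1),
            (if k ≤ m then (n.choose k : ℝ) * (poch (μ+k) (m-k)/((m-k).factorial:ℝ)) else 0))
          + ∑ k ∈ Finset.range (n+1),
            (if k+1 ≤ m then (n.choose k : ℝ) * (poch (μ+((k+1:ℕ):ℝ)) (m-(k+1))/((m-(k+1)).factorial:ℝ)) else 0) := by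
      rw [Finset.sum_range_succ']
      have hterm : ∀ k, (if k+1 ≤ m then (((n+1).choose (k+1) : ℝ)) * (poch (μ + (k+1:ℕ)) (m-(k+1))/((m-(k+1)).factorial:ℝ)) else 0)
          = (if k+1 ≤ m then ((n.choose (k+1) : ℝ)) * (poch (μ + (k+1:ℕ)) (m-(k+1))/((m-(k+1)).factorial:ℝ)) else 0)
            + (if k+1 ≤ m then ((n.choose k : ℝ)) * (poch (μ + ((k+1:ℕ):ℝ)) (m-(k+1))/((m-(k+1)).factorial:ℝ)) else 0) := by
        intro k
        by_cases hk : k + 1 ≤ m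
        · rw [if_pos hk, if_pos hk, if_pos hk, Nat.choose_succ_succ]
          push_cast
          ring
        · simp [hk]
      rw [Finset.sum_congr rfl (fun k _ => hterm k), Finset.sum_add_distrib]
      have h1 : (∑ k ∈ Finset.range (n+1),
            (if k+1 ≤ m then ((n.choose (k+1) : ℝ)) * (poch (μ + (k+1:ℕ)) (m-(k+1))/((m-(k+1)).factorial:ℝ)) else 0))
          + (if 0 ≤ m then (((n+1).choose 0 : ℝ)) * (poch (μ + (0:ℕ)) (m-0)/((m-0).factorial:ℝ)) else 0)
          = ∑ k ∈ Finset.range (n+1),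
            (if k ≤ m then (n.choose k : ℝ) * (poch (μ+k) (m-k)/((m-k).factorial:ℝ)) else 0) := by
        rw [Finset.sum_range_succ, Nat.choose_succ_self]
        simp only [Nat.cast_zero, zero_mul, if_pos (Nat.zero_le m)]
        rw [Finset.sum_range_succ' (fun k => if k ≤ m then (n.choose k : ℝ) * (poch (μ+k) (m-k)/((m-k).factorial:ℝ)) else 0) n]
        simp
      linarith [h1]
    rw [show μ + ((n+1 : ℕ):ℝ) = (μ+1) + (n:ℕ) by push_cast; ring, ih (μ+1) m,
      Finset.sum_congr rfl (fun k _ => hstep k), Finset.sum_add_distrib, hsplit]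

/-- the general term of the hypergeometric series -/
noncomputable def hterm (μ ν c z : ℝ) (m : ℕ) : ℝ :=
  poch μ m * poch ν m / (poch c m * (m.factorial : ℝ)) * z ^ m

lemma F21_eq_tsum_hterm (μ ν c z : ℝ) : F21 μ ν c z = ∑' m, hterm μ ν c z m := rfl

lemma summF' (μ ν c z : ℝ) (hc : ∀ k : ℕ, c + (k:ℝ) ≠ 0) (hz : |z| < 1) :
    Summable (hterm μ ν c z) := by
  set t : ℕ → ℝ := hterm μ ν c z with ht
  set r : ℝ := (|z| + 1) / 2 with hrdef
  have hr1 : r < 1 := by rw [hrdef]; linarith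
  have hzr : |z| < r := by rw [hrdef]; linarith
  have hrat : ∀ m : ℕ, t (m+1) = t m * ((μ+m)*(ν+m)/((c+m)*((m:ℝ)+1)) * z) := by
    intro m
    have h1 : (poch c m : ℝ) ≠ 0 := poch_ne_zero' hc m
    have h2 : (c + (m:ℝ)) ≠ 0 := hc m
    have h3 : (m.factorial : ℝ) ≠ 0 := Nat.cast_ne_zero.2 (Nat.factorial_ne_zero m)
    have h4 : ((m:ℝ)+1) ≠ 0 := by positivity
    have hf : ((m+1).factorial : ℝ) = ((m:ℝ)+1) * m.factorial := by
      push_cast [Nat.factorial_succ]; ring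
    simp only [ht, hterm, poch_succ', hf, pow_succ]
    field_simp
  have hat : Tendsto (fun m : ℕ => (m:ℝ)) atTop atTop := tendsto_natCast_atTop_atTop
  have hc' : Tendsto (fun m : ℕ => c + (m:ℝ)) atTop atTop := tendsto_atTop_add_const_left _ c hat
  have hm1 : Tendsto (fun m : ℕ => (m:ℝ) + 1) atTop atTop := tendsto_atTop_add_const_right _ 1 hat
  have h1 : Tendsto (fun m : ℕ => (μ+(m:ℝ))/(c+(m:ℝ))) atTop (𝓝 1) := by
    have h0 : Tendsto (fun m : ℕ => (μ - c)/(c+(m:ℝ))) atTop (𝓝 0) :=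
      tendsto_const_nhds.div_atTop hc'
    have := h0.const_add (1:ℝ)
    rw [add_zero] at this
    refine this.congr (fun m => ?_)
    have hne := hc m
    field_simp
    ring
  have h2 : Tendsto (fun m : ℕ => (ν+(m:ℝ))/((m:ℝ)+1)) atTop (𝓝 1) := by
    have h0 : Tendsto (fun m : ℕ => (ν - 1)/((m:ℝ)+1)) atTop (𝓝 0) :=
      tendsto_const_nhds.div_atTop hm1
    have := h0.const_add (1:ℝ)
    rw [add_zero] at this
    refine this.congr (fun m => ?_)
    have : ((m:ℝ)+1) ≠ 0 := by positivity
    field_simp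
    ring
  have h3 : Tendsto (fun m : ℕ => |(μ+m)*(ν+m)/((c+m)*((m:ℝ)+1)) * z|) atTop (𝓝 |z|) := by
    have h4 : Tendsto (fun m : ℕ => (μ+(m:ℝ))/(c+(m:ℝ)) * ((ν+(m:ℝ))/((m:ℝ)+1)) * z) atTop (𝓝 (1 * 1 * z)) :=
      ((h1.mul h2).mul tendsto_const_nhds)
    rw [one_mul, one_mul] at h4
    have h5 := h4.abs
    refine h5.congr (fun m => ?_)
    rw [div_mul_div_comm]
  have hev : ∀ᶠ m : ℕ in atTop, |(μ+m)*(ν+m)/((c+m)*((m:ℝ)+1)) * z| ≤ r :=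
    (h3.eventually (eventually_le_nhds hzr)).mono (fun m hm => hm)
  refine summable_of_ratio_norm_eventually_le hr1 ?_
  filter_upwards [hev] with m hm
  rw [hrat m]
  simp only [Real.norm_eq_abs]
  calc |t m * ((μ + ↑m) * (ν + ↑m) / ((c + ↑m) * (↑m + 1)) * z)|
      = |t m| * |(μ + ↑m) * (ν + ↑m) / ((c + ↑m) * (↑m + 1)) * z| := abs_mul _ _
    _ ≤ |t m| * r := mul_le_mul_of_nonneg_left hm (abs_nonneg _)
    _ = r * |t m| := mul_comm _ _

/-- the shifted summand -/
noncomputable def Gk (μ ν c z : ℝ) (n k : ℕ) (m : ℕ) : ℝ :=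
  if k ≤ m then
    (n.choose k : ℝ) * (poch ν k / poch c k) * hterm (μ+k) (ν+k) (c+k) z (m-k) * z ^ k
  else 0

lemma Gk_shift (μ ν c z : ℝ) (n k m : ℕ) :
    Gk μ ν c z n k (m + k)
      = ((n.choose k : ℝ) * (poch ν k / poch c k) * z ^ k) * hterm (μ+k) (ν+k) (c+k) z m := by
  rw [Gk, if_pos (Nat.le_add_left k m), Nat.add_sub_cancel]
  ring

lemma Gk_support (μ ν c z : ℝ) (n k : ℕ) :
    ∀ m ∉ Set.range (fun m : ℕ => m + k), Gk μ ν c z n k m = 0 := by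
  intro m hm
  rw [Gk, if_neg]
  intro hkm
  exact hm ⟨m - k, Nat.sub_add_cancel hkm⟩

theorem stmt17 (n : ℕ) (α : ℝ) (hα : α ∈ Set.Ioc (0:ℝ) 1) (μ ν c : ℝ)
    (hc : ∀ k : ℕ, c ≠ -(k : ℝ)) (x : ℝ) (hx : 0 < x) (hx1 : |x ^ α| < 1) :
    F21 (μ + n) ν c (x ^ α)
      = ∑ k ∈ Finset.range (n + 1),
          (n.choose k : ℝ) * (poch ν k / poch c k) * x ^ (α * k)
            * F21 (μ + k) (ν + k) (c + k) (x ^ α) := by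
  set z : ℝ := x ^ α with hzdef
  have hz : |z| < 1 := hx1
  have hc0 : ∀ k : ℕ, c + (k:ℝ) ≠ 0 := by
    intro k h
    exact hc k (by linarith)
  have hck : ∀ k : ℕ, ∀ j : ℕ, (c + (k:ℝ)) + (j:ℝ) ≠ 0 := by
    intro k j h
    have := hc0 (k + j)
    push_cast at this
    exact this (by linarith)
  have hxk : ∀ k : ℕ, x ^ (α * (k:ℝ)) = z ^ k := by
    intro k
    rw [hzdef, ← Real.rpow_natCast (x ^ α) k, ← Real.rpow_mul hx.le]
  have hinj : ∀ k : ℕ, Function.Injective (fun m : ℕ => m + k) :=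
    fun k => add_left_injective k
  have hsumT : ∀ k : ℕ, Summable (hterm (μ+(k:ℕ)) (ν+(k:ℕ)) (c+(k:ℕ)) z) :=
    fun k => summF' _ _ _ _ (hck k) hz
  have hsumG : ∀ k : ℕ, Summable (Gk μ ν c z n k) := by
    intro k
    refine ((hinj k).summable_iff (Gk_support μ ν c z n k)).mp ?_
    have := (hsumT k).mul_left ((n.choose k : ℝ) * (poch ν k / poch c k) * z ^ k)
    refine this.congr (fun m => ?_)
    exact (Gk_shift μ ν c z n k m).symm
  -- rewrite each RHS term as a tsum of Gk
  have hterm_eq : ∀ k : ℕ,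
      (n.choose k : ℝ) * (poch ν k / poch c k) * x ^ (α * k)
          * F21 (μ + k) (ν + k) (c + k) z
        = ∑' m, Gk μ ν c z n k m := by
    intro k
    rw [hxk k, F21_eq_tsum_hterm, ← (hsumT k).tsum_mul_left
        ((n.choose k : ℝ) * (poch ν k / poch c k) * z ^ k)]
    rw [← Function.Injective.tsum_eq (hinj k) (f := Gk μ ν c z n k)]
    · exact tsum_congr fun m => by rw [Gk_shift]
    · intro m hm
      exact by
        by_contra hmem
        exact hm (Gk_support μ ν c z n k m hmem)
  calc F21 (μ + n) ν c z
      = ∑' m, hterm (μ+(n:ℕ)) ν c z m := F21_eq_tsum_hterm _ _ _ _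
    _ = ∑' m, ∑ k ∈ Finset.range (n+1), Gk μ ν c z n k m := by
        refine tsum_congr fun m => ?_
        -- pointwise identity
        have hGk : ∀ k, Gk μ ν c z n k m
            = (poch ν m / poch c m * z ^ m)
              * (if k ≤ m then (n.choose k : ℝ) * (poch (μ + k) (m - k) / (m - k).factorial) else 0) := by
          intro k
          by_cases hk : k ≤ m
          · rw [Gk, if_pos hk, if_pos hk, hterm]
            have hν : poch ν m = poch ν k * poch (ν + k) (m-k) := by
              rw [← poch_add']; congr 1; omega
            have hcc : poch c m = poch c k * poch (c + k) (m-k) := by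
              rw [← poch_add']; congr 1; omega
            have hzz : z ^ m = z ^ (m-k) * z ^ k := by
              rw [← pow_add]; congr 1; omega
            have hd1 : poch c k ≠ 0 := poch_ne_zero' hc0 k
            have hd2 : poch (c + k) (m-k) ≠ 0 := poch_ne_zero' (hck k) (m-k)
            have hd3 : ((m-k).factorial : ℝ) ≠ 0 := Nat.cast_ne_zero.2 (Nat.factorial_ne_zero _)
            rw [hν, hcc, hzz]
            field_simp
          · rw [Gk, if_neg hk, if_neg hk, mul_zero]
        rw [Finset.sum_congr rfl (fun k _ => hGk k), ← Finset.mul_sum, ← Pkey' n μ m]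
        rw [hterm]
        have hd4 : poch c m ≠ 0 := poch_ne_zero' hc0 m
        have hd5 : ((m).factorial : ℝ) ≠ 0 := Nat.cast_ne_zero.2 (Nat.factorial_ne_zero _)
        field_simp
    _ = ∑ k ∈ Finset.range (n+1), ∑' m, Gk μ ν c z n k m :=
        Summable.tsum_finsetSum (fun k _ => hsumG k)
    _ = ∑ k ∈ Finset.range (n + 1),
          (n.choose k : ℝ) * (poch ν k / poch c k) * x ^ (α * k)
            * F21 (μ + k) (ν + k) (c + k) z := by
        exact Finset.sum_congr rfl (fun k _ => (hterm_eq k).symm)
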